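/- Similarity-based analogical proportions do not in general satisfy p-commutativity: in the two-element algebra ({a, b}, f) with f(a)=b and f(b)=b, the proportion a : b ≈ b : a fails. -/
import Mathlib


/-- Terms over a language `L` of function symbols with arities `ar`,
with variables indexed by `ℕ`. -/
inductive Term (L : Type) (ar : L → ℕ) : Type
  | var : ℕ → Term L ar
  | app : (f : L) → (Fin (ar f) → Term L ar) → Term L ar

/-- An `L`-algebra. -/
structure Alg (L : Type) (ar : L → ℕ) where
  carrier : Type
  op : (f : L) → (Fin (ar f) → carrier) → carrier

/-- Evaluation of a term in an algebra under an assignment of the variables. -/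
def Term.eval {L : Type} {ar : L → ℕ} (A : Alg L ar) (ρ : ℕ → A.carrier) :
    Term L ar → A.carrier
  | .var n => ρ n
  | .app f ts => A.op f fun i => (ts i).eval A ρ

/-- Homomorphisms of `L`-algebras. -/
def IsHom {L : Type} {ar : L → ℕ} (A B : Alg L ar) (H : A.carrier → B.carrier) : Prop :=
  ∀ (f : L) (as : Fin (ar f) → A.carrier), H (A.op f as) = B.op f (H ∘ as)

/-- Justifications of an arrow `a → b`: pairs of terms `(s, t)` realized under
a common assignment. -/
def Jus {L : Type} {ar : L → ℕ} (A : Alg L ar) (p : A.carrier × A.carrier) :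
    Set (Term L ar × Term L ar) :=
  {st | ∃ ρ : ℕ → A.carrier, st.1.eval A ρ = p.1 ∧ st.2.eval A ρ = p.2}

/-- Trivial justifications in `(A, B)`: those justifying every arrow in `A` and in `B`. -/
def TrivJus {L : Type} {ar : L → ℕ} (A B : Alg L ar) : Set (Term L ar × Term L ar) :=
  {st | (∀ p : A.carrier × A.carrier, st ∈ Jus A p) ∧
        (∀ q : B.carrier × B.carrier, st ∈ Jus B q)}

/-- The arrow relation `(a→b) ≲_{(A,B)} (c→d)`: either all justifications on either side
are trivial, or the common justifications include a non-trivial one and form a maximal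
set among common justification sets with arrows of `B`. -/
def ArrLe {L : Type} {ar : L → ℕ} (A B : Alg L ar)
    (p : A.carrier × A.carrier) (q : B.carrier × B.carrier) : Prop :=
  (Jus A p ∪ Jus B q ⊆ TrivJus A B) ∨
  (TrivJus A B ⊂ Jus A p ∩ Jus B q ∧
    ∀ q' : B.carrier × B.carrier,
      TrivJus A B ⊂ Jus A p ∩ Jus B q → Jus A p ∩ Jus B q ⊆ Jus A p ∩ Jus B q' →
        TrivJus A B ⊂ Jus A p ∩ Jus B q' ∧ Jus A p ∩ Jus B q' ⊆ Jus A p ∩ Jus B q)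

/-- Similarity-based analogical proportion `a : b ≈_{(A,B)} c : d`. -/
def AP {L : Type} {ar : L → ℕ} (A B : Alg L ar) (a b : A.carrier) (c d : B.carrier) : Prop :=
  ArrLe A B (a, b) (c, d) ∧ ArrLe A B (b, a) (d, c) ∧
  ArrLe B A (c, d) (a, b) ∧ ArrLe B A (d, c) (b, a)

/-- Generalizations of an element. -/
def Gen {L : Type} {ar : L → ℕ} (A : Alg L ar) (a : A.carrier) : Set (Term L ar) :=
  {s | ∃ ρ : ℕ → A.carrier, s.eval A ρ = a}

/-- Trivial generalizations in `(A, B)`. -/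
def TrivGen {L : Type} {ar : L → ℕ} (A B : Alg L ar) : Set (Term L ar) :=
  {s | (∀ a : A.carrier, s ∈ Gen A a) ∧ (∀ b : B.carrier, s ∈ Gen B b)}

/-- `a ≲_{(A,B)} b` for elements. -/
def SimLe {L : Type} {ar : L → ℕ} (A B : Alg L ar) (a : A.carrier) (b : B.carrier) : Prop :=
  (Gen A a ∪ Gen B b ⊆ TrivGen A B) ∨
  (TrivGen A B ⊂ Gen A a ∩ Gen B b ∧
    ∀ b' : B.carrier,
      TrivGen A B ⊂ Gen A a ∩ Gen B b → Gen A a ∩ Gen B b ⊆ Gen A a ∩ Gen B b' →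
        TrivGen A B ⊂ Gen A a ∩ Gen B b' ∧ Gen A a ∩ Gen B b' ⊆ Gen A a ∩ Gen B b)

/-- The similarity relation `a ≈_{(A,B)} b`. -/
def Sim {L : Type} {ar : L → ℕ} (A B : Alg L ar) (a : A.carrier) (b : B.carrier) : Prop :=
  SimLe A B a b ∧ SimLe B A b a

/-- The algebra `({a,b}, f)` with `f(a)=b, f(b)=b`, where `a=0, b=1`. -/
abbrev A13 : Alg Unit (fun _ => 1) := ⟨Fin 2, fun _ v => ![1, 1] (v 0)⟩

lemma app_eval_one (f : Unit) (ts : Fin 1 → Term Unit (fun _ => 1))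
    (ρ : ℕ → (A13).carrier) : (Term.app f ts).eval A13 ρ = 1 := by
  show ![1,1] _ = 1
  have : ∀ x : Fin 2, ![(1:Fin 2),1] x = 1 := by decide
  exact this _

lemma eval_var_or_one (t : Term Unit (fun _ => 1)) (ρ : ℕ → (A13).carrier) :
    (∃ n, t = Term.var n) ∨ t.eval A13 ρ = 1 := by
  cases t with
  | var n => exact Or.inl ⟨n, rfl⟩
  | app f ts => exact Or.inr (app_eval_one f ts ρ)

/-- p-commutativity fails: `a : b ≈ b : a` fails in this algebra. -/
theorem ap_p_commutativity_fails : ¬ AP A13 A13 (0 : Fin 2) 1 1 0 := by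
  rintro ⟨h, -, -, -⟩
  rcases h with h | ⟨⟨hsub, hne⟩, -⟩
  · -- the justification (var 0, f(var 0)) is non-trivial
    have hmem : ((Term.var 0, Term.app () (fun _ => Term.var 0)) :
        Term Unit (fun _ => 1) × Term Unit (fun _ => 1)) ∈ Jus A13 ((0 : Fin 2), 1) := by
      exact ⟨fun _ => 0, rfl, app_eval_one _ _ _⟩
    have htriv := h (Set.mem_union_left _ hmem)
    obtain ⟨ρ, -, h2⟩ := htriv.1 ((0 : Fin 2), 0)
    have := app_eval_one () (fun _ => Term.var 0) ρ
    rw [this] at h2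
    exact absurd h2 (by decide)
  · -- TrivJus = Jus(0,1) ∩ Jus(1,0), contradicting strictness
    apply hne
    rintro ⟨s, t⟩ ⟨⟨ρ, hs0, ht1⟩, ⟨ρ', hs1, ht0⟩⟩
    -- s and t must be variables
    obtain ⟨i, rfl⟩ := (eval_var_or_one s ρ).resolve_right (by rw [hs0]; decide)
    obtain ⟨j, rfl⟩ := (eval_var_or_one t ρ').resolve_right (by rw [ht0]; decide)
    have hij : i ≠ j := by
      intro h; subst h
      rw [show (Term.var i).eval A13 ρ = ρ i from rfl] at hs0 ht1
      rw [hs0] at ht1; exact absurd ht1 (by decide)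
    constructor <;> intro p <;>
      exact ⟨fun n => if n = i then p.1 else p.2, by simp [Term.eval], by
        simp [Term.eval, if_neg (Ne.symm hij)]⟩
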